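/- Let s > 1 be real and let z₁, z₂ be points of the complex upper half-plane ℍ such that γ·z₂ ≠ z₁ for every γ ∈ SL(2, ℤ) (acting by Möbius transformations). Then the family (Q_{s−1}(cosh d(z₁, γ·z₂)))_{γ ∈ SL(2,ℤ)} is summable, and its sum is strictly positive. (Hence the Poincaré series defining the automorphic Green's function G_s(z₁, z₂) = −2·∑_{γ} Q_{s−1}(cosh d(z₁, γ·z₂)) converges absolutely and G_s(z₁, z₂) < 0 off the diagonal orbit.) -/

import Mathlib

open MeasureTheory UpperHalfPlane

/-- The Legendre function of the second kind `Q_{s−1}(t)`, defined for `s > 1`, `t > 1` by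
`Q_{s−1}(t) := ∫₀^∞ (t + √(t²−1)·cosh v)^(−s) dv`. -/
noncomputable def legendreQ (s t : ℝ) : ℝ :=
  ∫ v in Set.Ioi (0 : ℝ), (t + Real.sqrt (t ^ 2 - 1) * Real.cosh v) ^ (-s)

namespace GreenAux

open Matrix Complex ModularGroup
open scoped MatrixGroups

local notation "SL2Z" => Matrix.SpecialLinearGroup (Fin 2) ℤ

lemma integrableOn_aux {s a b : ℝ} (hs : 0 < s) (ha : 0 ≤ a) (hb : 0 < b) :
    IntegrableOn (fun v : ℝ => (a + b * Real.cosh v) ^ (-s)) (Set.Ioi (0:ℝ)) := by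
  have base_pos : ∀ v : ℝ, 0 < a + b * Real.cosh v := fun v =>
    lt_of_lt_of_le (by positivity : (0:ℝ) < b * Real.cosh v) (le_add_of_nonneg_left ha)
  have hmajor : IntegrableOn (fun v : ℝ => (b/2) ^ (-s) * Real.exp (-s * v)) (Set.Ioi (0:ℝ)) :=
    (exp_neg_integrableOn_Ioi 0 hs).const_mul _
  refine hmajor.mono' ?_ ?_
  · apply Continuous.aestronglyMeasurable
    apply Continuous.rpow_const
    · continuity
    · exact fun v => Or.inl (base_pos v).ne'
  · filter_upwards [ae_restrict_mem measurableSet_Ioi] with v hv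
    have h1 : (b/2) * Real.exp v ≤ a + b * Real.cosh v := by
      have : Real.exp v / 2 ≤ Real.cosh v := by
        rw [Real.cosh_eq]; nlinarith [Real.exp_pos (-v)]
      nlinarith [Real.exp_pos v]
    have h2 : (0:ℝ) < (b/2) * Real.exp v := by positivity
    rw [Real.norm_eq_abs, _root_.abs_of_nonneg (Real.rpow_nonneg (base_pos v).le _)]
    calc (a + b * Real.cosh v) ^ (-s) ≤ ((b/2) * Real.exp v) ^ (-s) :=
          Real.rpow_le_rpow_of_nonpos h2 h1 (neg_nonpos.mpr hs.le)
      _ = (b/2) ^ (-s) * Real.exp (-s * v) := by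
          rw [Real.mul_rpow (by positivity) (Real.exp_pos v).le,
            ← Real.exp_log (Real.exp_pos v), ← Real.exp_mul, Real.log_exp]
          ring_nf

lemma integrableOn_legendre {s t : ℝ} (hs : 0 < s) (ht : 1 < t) :
    IntegrableOn (fun v : ℝ => (t + Real.sqrt (t ^ 2 - 1) * Real.cosh v) ^ (-s))
      (Set.Ioi (0:ℝ)) :=
  integrableOn_aux hs (by linarith) (Real.sqrt_pos.mpr (by nlinarith))

lemma legendreQ_nonneg {s t : ℝ} (ht : 1 ≤ t) : 0 ≤ legendreQ s t := by
  refine integral_nonneg fun v => Real.rpow_nonneg ?_ _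
  have := Real.sqrt_nonneg (t^2-1); have := (Real.cosh_pos (x := v)).le; nlinarith

lemma legendreQ_pos {s t : ℝ} (hs : 0 < s) (ht : 1 < t) : 0 < legendreQ s t := by
  have hpos : ∀ v : ℝ, 0 < (t + Real.sqrt (t ^ 2 - 1) * Real.cosh v) ^ (-s) := by
    intro v
    apply Real.rpow_pos_of_pos
    have := Real.sqrt_nonneg (t^2-1); have := (Real.cosh_pos (x := v)).le; nlinarith
  rw [legendreQ, setIntegral_pos_iff_support_of_nonneg_ae ?_ (integrableOn_legendre hs ht)]
  · have : Function.support (fun v : ℝ => (t + Real.sqrt (t ^ 2 - 1) * Real.cosh v) ^ (-s))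
        = Set.univ := Set.eq_univ_of_forall fun v => (hpos v).ne'
    rw [this, Set.univ_inter, Real.volume_Ioi]
    exact ENNReal.zero_lt_top
  · filter_upwards with v using (hpos v).le


/-- The constant `∫₀^∞ (1 + cosh v / 2)^{-s} dv`. -/
noncomputable def QK (s : ℝ) : ℝ := ∫ v in Set.Ioi (0:ℝ), (1 + (1/2) * Real.cosh v) ^ (-s)

lemma QK_nonneg (s : ℝ) : 0 ≤ QK s := by
  refine integral_nonneg fun v => Real.rpow_nonneg ?_ _
  have := (Real.cosh_pos (x := v)).le; nlinarith

lemma legendreQ_le {s t : ℝ} (hs : 0 < s) (ht : 2 ≤ t) :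
    legendreQ s t ≤ QK s * t ^ (-s) := by
  have ht1 : (1:ℝ) < t := by linarith
  have ht0 : (0:ℝ) < t := by linarith
  have key : ∀ v : ℝ, (t + Real.sqrt (t ^ 2 - 1) * Real.cosh v) ^ (-s)
      ≤ (1 + (1/2) * Real.cosh v) ^ (-s) * t ^ (-s) := by
    intro v
    have hsq : t / 2 ≤ Real.sqrt (t ^ 2 - 1) := by
      rw [show t / 2 = Real.sqrt ((t/2)^2) by rw [Real.sqrt_sq (by linarith)]]
      apply Real.sqrt_le_sqrt; nlinarith
    have hch := (Real.cosh_pos (x := v)).le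
    have h1 : t * (1 + (1/2) * Real.cosh v) ≤ t + Real.sqrt (t ^ 2 - 1) * Real.cosh v := by
      have : (t/2) * Real.cosh v ≤ Real.sqrt (t ^ 2 - 1) * Real.cosh v :=
        mul_le_mul_of_nonneg_right hsq hch
      nlinarith
    have h2 : (0:ℝ) < t * (1 + (1/2) * Real.cosh v) := by nlinarith
    calc (t + Real.sqrt (t ^ 2 - 1) * Real.cosh v) ^ (-s)
        ≤ (t * (1 + (1/2) * Real.cosh v)) ^ (-s) :=
          Real.rpow_le_rpow_of_nonpos h2 h1 (neg_nonpos.mpr hs.le)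
      _ = (1 + (1/2) * Real.cosh v) ^ (-s) * t ^ (-s) := by
          rw [Real.mul_rpow ht0.le (by nlinarith), mul_comm]
  calc legendreQ s t ≤ ∫ v in Set.Ioi (0:ℝ), (1 + (1/2) * Real.cosh v) ^ (-s) * t ^ (-s) := by
        refine setIntegral_mono_on (integrableOn_legendre hs ht1)
          (((integrableOn_aux hs zero_le_one one_half_pos).mul_const _)) measurableSet_Ioi
          fun v _ => key v
    _ = QK s * t ^ (-s) := by rw [integral_mul_const]; rfl


lemma num_apply (g : SL2Z) (z : ℍ) :
    UpperHalfPlane.num (g : GL(2,ℝ)⁺) z = (g 0 0 : ℂ) * z + (g 0 1 : ℂ) := by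
  simp [UpperHalfPlane.num, ModularGroup.coe]

lemma denom_eq' (z₂ : ℍ) (γ : SL2Z) :
    denom (γ : GL(2,ℝ)⁺) z₂ = (γ 1 0 : ℂ) * z₂ + (γ 1 1 : ℂ) := by
  show denom (γ : GL (Fin 2) ℝ) z₂ = _
  rw [ModularGroup.denom_apply]

lemma denom_coe_eq (γ : SL2Z) (z : ℂ) :
    denom (γ : GL (Fin 2) ℝ) z = denom (γ : GL(2,ℝ)⁺) z := rfl

/-- The key quantity `Q_γ = c z₁ z₂ + d z₁ - a z₂ - b`. -/
noncomputable def Qc (z₁ z₂ : ℍ) (γ : SL2Z) : ℂ :=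
  (γ 1 0 : ℂ) * (z₁ * z₂) + (γ 1 1 : ℂ) * z₁ - (γ 0 0 : ℂ) * z₂ - (γ 0 1 : ℂ)

lemma sub_smul_eq (z₁ z₂ : ℍ) (γ : SL2Z) :
    (z₁ : ℂ) - ((γ • z₂ : ℍ) : ℂ) = Qc z₁ z₂ γ / denom (γ : GL(2,ℝ)⁺) z₂ := by
  have hd := denom_ne_zero (γ : GL(2,ℝ)⁺) z₂
  rw [sl_moeb, UpperHalfPlane.coe_smul_of_det_pos (by simp), denom_coe_eq]
  rw [eq_div_iff hd, sub_mul, div_mul_cancel₀ _ hd]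
  rw [show num (γ : GL (Fin 2) ℝ) z₂ = num (γ : GL(2,ℝ)⁺) z₂ from rfl, num_apply, denom_eq', Qc]
  ring


lemma cosh_dist_eq (z₁ z₂ : ℍ) (γ : SL2Z) :
    Real.cosh (dist z₁ (γ • z₂)) =
      1 + ‖(Qc z₁ z₂ γ)‖ ^ 2 / (2 * z₁.im * z₂.im) := by
  have hd := denom_ne_zero (γ : GL(2,ℝ)⁺) z₂
  have hN : Complex.normSq (denom (γ : GL(2,ℝ)⁺) z₂) ≠ 0 := normSq_denom_ne_zero _ z₂.im_ne_zero
  rw [UpperHalfPlane.cosh_dist, ModularGroup.im_smul_eq_div_normSq, denom_coe_eq,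
    Complex.dist_eq, sub_smul_eq, norm_div]
  rw [div_pow, Complex.sq_norm (denom _ _)]
  have h1 : z₁.im ≠ 0 := z₁.im_pos.ne'
  have h2 : z₂.im ≠ 0 := z₂.im_pos.ne'
  field_simp

/-- `cosh (dist z w) >= z.im / (2 w.im)`. -/
lemma le_cosh_dist (z w : ℍ) : z.im / (2 * w.im) ≤ Real.cosh (dist z w) := by
  rw [UpperHalfPlane.cosh_dist]
  have hz := z.im_pos; have hw := w.im_pos
  have h1 : |z.im - w.im| ≤ dist (z : ℂ) (w : ℂ) := by
    rw [Complex.dist_eq]; simpa using Complex.abs_im_le_norm ((z:ℂ) - w)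
  have h2 : (z.im - w.im)^2 ≤ dist (z : ℂ) (w : ℂ) ^ 2 := by
    rw [← _root_.sq_abs (z.im - w.im)]; exact pow_le_pow_left₀ (abs_nonneg _) h1 2
  have step1 : z.im / (2 * w.im) ≤ 1 + (z.im - w.im)^2 / (2 * z.im * w.im) := by
    rw [show (1:ℝ) + (z.im - w.im)^2 / (2 * z.im * w.im)
        = (2*z.im*w.im + (z.im-w.im)^2)/(2*z.im*w.im) by field_simp]
    rw [div_le_div_iff₀ (by positivity) (by positivity)]
    ring_nf
    nlinarith [pow_pos hw 3, sq_nonneg (z.im - w.im)]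
  refine step1.trans ?_
  gcongr

lemma cosh_dist_ge_denom (z₁ z₂ : ℍ) (γ : SL2Z) :
    z₁.im * ‖(denom (γ : GL(2,ℝ)⁺) z₂)‖ ^ 2 / (2 * z₂.im)
      ≤ Real.cosh (dist z₁ (γ • z₂)) := by
  have h := le_cosh_dist z₁ (γ • z₂)
  rw [ModularGroup.im_smul_eq_div_normSq, denom_coe_eq] at h
  have hN : (0:ℝ) < Complex.normSq (denom (γ : GL(2,ℝ)⁺) z₂) := normSq_denom_pos _ z₂.im_ne_zero
  have h2 := z₂.im_pos
  calc z₁.im * ‖(denom (γ : GL(2,ℝ)⁺) z₂)‖ ^ 2 / (2 * z₂.im)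
      = z₁.im / (2 * (z₂.im / Complex.normSq (denom (γ : GL(2,ℝ)⁺) z₂))) := by
        rw [Complex.sq_norm]; field_simp
    _ ≤ _ := h


/-- A chosen base solution `(a₀, b₀)` of `a₀ d - b₀ c = 1`, when one exists. -/
noncomputable def base (c d : ℤ) : ℤ × ℤ :=
  open Classical in
  if h : ∃ p : ℤ × ℤ, p.1 * d - p.2 * c = 1 then h.choose else (0, 0)

lemma base_spec {c d : ℤ} (h : ∃ p : ℤ × ℤ, p.1 * d - p.2 * c = 1) :
    (base c d).1 * d - (base c d).2 * c = 1 := by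
  rw [base]
  rw [dif_pos h]
  exact h.choose_spec

lemma det_eq (γ : SL2Z) : γ 0 0 * γ 1 1 - γ 0 1 * γ 1 0 = 1 := by
  have := γ.prop
  rwa [Matrix.det_fin_two] at this

lemma exists_base (γ : SL2Z) : ∃ p : ℤ × ℤ, p.1 * (γ 1 1) - p.2 * (γ 1 0) = 1 :=
  ⟨(γ 0 0, γ 0 1), det_eq γ⟩

/-- The position of `γ` along the fiber of its bottom row. -/
noncomputable def tIdx (γ : SL2Z) : ℤ :=
  if γ 1 0 = 0 then (γ 0 1 - (base (γ 1 0) (γ 1 1)).2) / (γ 1 1)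
  else (γ 0 0 - (base (γ 1 0) (γ 1 1)).1) / (γ 1 0)

lemma row_eq (γ : SL2Z) :
    γ 0 0 = (base (γ 1 0) (γ 1 1)).1 + tIdx γ * γ 1 0 ∧
    γ 0 1 = (base (γ 1 0) (γ 1 1)).2 + tIdx γ * γ 1 1 := by
  set a := γ 0 0; set b := γ 0 1; set c := γ 1 0; set d := γ 1 1
  set a₀ := (base c d).1; set b₀ := (base c d).2
  have h₀ : a₀ * d - b₀ * c = 1 := base_spec (exists_base γ)
  have hdet : a * d - b * c = 1 := det_eq γ
  have key : (a - a₀) * d = (b - b₀) * c := by ring_nf; linarith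
  by_cases hc : c = 0
  · have hd0 : d ≠ 0 := by intro hd; rw [hc, hd] at hdet; simp at hdet
    have ha : a = a₀ := by
      have : a * d = a₀ * d := by rw [hc] at hdet h₀; linarith
      exact mul_right_cancel₀ hd0 this
    have hdu : IsUnit d := by
      refine IsUnit.of_mul_eq_one a ?_
      rw [hc] at hdet; linarith
    have hdvd : d ∣ b - b₀ := hdu.dvd
    have ht : tIdx γ = (b - b₀) / d := by rw [tIdx, if_pos hc]
    constructor
    · rw [ht, hc, mul_zero, add_zero, ha]
    · rw [ht, Int.ediv_mul_cancel hdvd]; ring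
  · have hcop : IsCoprime c d := ⟨-b₀, a₀, by linarith⟩
    have hdvd : c ∣ a - a₀ := by
      refine hcop.dvd_of_dvd_mul_right ?_
      exact ⟨b - b₀, by linarith [key]⟩
    have ht : tIdx γ = (a - a₀) / c := by rw [tIdx, if_neg hc]
    have ha : a = a₀ + tIdx γ * c := by
      rw [ht, Int.ediv_mul_cancel hdvd]; ring
    refine ⟨ha, ?_⟩
    have : (b - b₀) * c = (tIdx γ * d) * c := by
      rw [← key, ht]
      rw [show (a - a₀) / c * d * c = (a - a₀) / c * c * d by ring, Int.ediv_mul_cancel hdvd]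
    have := mul_right_cancel₀ hc this
    linarith

lemma sl2z_ext {γ γ' : SL2Z} (h00 : γ 0 0 = γ' 0 0) (h01 : γ 0 1 = γ' 0 1)
    (h10 : γ 1 0 = γ' 1 0) (h11 : γ 1 1 = γ' 1 1) : γ = γ' := by
  ext i j
  fin_cases i <;> fin_cases j <;> assumption


noncomputable def wc (z₂ : ℍ) (c d : ℤ) : ℂ := (c : ℂ) * z₂ + d

noncomputable def Kc (z₁ z₂ : ℍ) (c d : ℤ) : ℂ :=
  (c : ℂ) * (z₁ * z₂) + (d : ℂ) * z₁ - ((base c d).1 : ℂ) * z₂ - ((base c d).2 : ℂ)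

noncomputable def theta (z₁ z₂ : ℍ) (c d : ℤ) : ℝ :=
  (Kc z₁ z₂ c d * (starRingEnd ℂ) (wc z₂ c d)).re / Complex.normSq (wc z₂ c d)

noncomputable def kIdx (z₁ z₂ : ℍ) (γ : SL2Z) : ℤ :=
  tIdx γ - round (theta z₁ z₂ (γ 1 0) (γ 1 1))


lemma denom_eq_wc (z₂ : ℍ) (γ : SL2Z) :
    denom (γ : GL(2,ℝ)⁺) z₂ = wc z₂ (γ 1 0) (γ 1 1) := by
  rw [denom_eq', wc]

lemma Qc_eq (z₁ z₂ : ℍ) (γ : SL2Z) :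
    Qc z₁ z₂ γ = Kc z₁ z₂ (γ 1 0) (γ 1 1) - (tIdx γ : ℂ) * wc z₂ (γ 1 0) (γ 1 1) := by
  obtain ⟨h0, h1⟩ := row_eq γ
  rw [Qc, Kc, wc, h0, h1]
  push_cast
  ring

/-- The map recording the bottom row and the normalized fiber index; it is injective. -/
noncomputable def phi (z₁ z₂ : ℍ) (γ : SL2Z) : (Fin 2 → ℤ) × ℤ :=
  (![γ 1 0, γ 1 1], kIdx z₁ z₂ γ)

lemma phi_injective (z₁ z₂ : ℍ) : Function.Injective (phi z₁ z₂) := by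
  intro γ γ' h
  have h1 : γ 1 0 = γ' 1 0 := by
    have := congrFun (congrArg Prod.fst h) 0; simpa [phi] using this
  have h2 : γ 1 1 = γ' 1 1 := by
    have := congrFun (congrArg Prod.fst h) 1; simpa [phi] using this
  have hk : kIdx z₁ z₂ γ = kIdx z₁ z₂ γ' := congrArg Prod.snd h
  have ht : tIdx γ = tIdx γ' := by
    rw [kIdx, kIdx, h1, h2] at hk
    omega
  obtain ⟨g0, g1⟩ := row_eq γ
  obtain ⟨g0', g1'⟩ := row_eq γ'
  refine sl2z_ext ?_ ?_ h1 h2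
  · rw [g0, g0', h1, h2, ht]
  · rw [g1, g1', h1, h2, ht]


/-- summable weight in the fiber direction -/
noncomputable def vW (k : ℤ) : ℝ := if k = 0 then 1 else ((k : ℝ) ^ 2)⁻¹

lemma vW_nonneg (k : ℤ) : 0 ≤ vW k := by
  rw [vW]; split <;> positivity

/-- the constant in the main pointwise bound -/
noncomputable def PC (z₁ z₂ : ℍ) (s : ℝ) : ℝ :=
  max ((2 * z₂.im / z₁.im) ^ s) ((8 * z₁.im * z₂.im) ^ s)

lemma PC_nonneg (z₁ z₂ : ℍ) (s : ℝ) : 0 ≤ PC z₁ z₂ s :=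
  le_trans (Real.rpow_nonneg (by positivity) s) (le_max_left _ _)

lemma sq_rpow_neg {x s : ℝ} (hx : 0 ≤ x) : (x ^ 2) ^ (-s) = x ^ (-(2 * s)) := by
  rw [← Real.rpow_natCast x 2, ← Real.rpow_mul hx]
  norm_num

/-- The main pointwise estimate. -/
lemma key_bound (z₁ z₂ : ℍ) {s : ℝ} (hs : 1 ≤ s) (γ : SL2Z) :
    Real.cosh (dist z₁ (γ • z₂)) ^ (-s) ≤
      PC z₁ z₂ s *
        (‖(denom (γ : GL(2,ℝ)⁺) z₂)‖ ^ (-(2 * s)) * vW (kIdx z₁ z₂ γ)) := by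
  have hs0 : 0 < s := lt_of_lt_of_le one_pos hs
  set c := γ 1 0; set d := γ 1 1
  set δ := ‖(denom (γ : GL(2,ℝ)⁺) z₂)‖ with hδ
  have hδpos : 0 < δ := by
    rw [hδ]; exact (norm_pos_iff.mpr (denom_ne_zero _ z₂))
  have hy₁ := z₁.im_pos; have hy₂ := z₂.im_pos
  by_cases hk : kIdx z₁ z₂ γ = 0
  · -- use the denominator bound
    have hA : (z₁.im / (2 * z₂.im)) * δ ^ 2 ≤ Real.cosh (dist z₁ (γ • z₂)) := by
      have := cosh_dist_ge_denom z₁ z₂ γ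
      calc (z₁.im / (2 * z₂.im)) * δ ^ 2 = z₁.im * δ ^ 2 / (2 * z₂.im) := by ring
        _ ≤ _ := this
    have hApos : 0 < (z₁.im / (2 * z₂.im)) * δ ^ 2 := by positivity
    calc Real.cosh (dist z₁ (γ • z₂)) ^ (-s)
        ≤ ((z₁.im / (2 * z₂.im)) * δ ^ 2) ^ (-s) :=
          Real.rpow_le_rpow_of_nonpos hApos hA (neg_nonpos.mpr hs0.le)
      _ = (z₁.im / (2 * z₂.im)) ^ (-s) * δ ^ (-(2 * s)) := by
          rw [Real.mul_rpow (by positivity) (by positivity), sq_rpow_neg hδpos.le]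
      _ = (2 * z₂.im / z₁.im) ^ s * δ ^ (-(2 * s)) := by
          rw [Real.rpow_neg (by positivity), ← Real.inv_rpow (by positivity),
            inv_div]
      _ ≤ PC z₁ z₂ s * (δ ^ (-(2 * s)) * vW (kIdx z₁ z₂ γ)) := by
          rw [hk, vW, if_pos rfl, mul_one]
          exact mul_le_mul_of_nonneg_right (le_max_left _ _) (Real.rpow_nonneg hδpos.le _)
  · -- use the Q bound
    set t := tIdx γ
    set θ := theta z₁ z₂ c d with hθ
    set k := kIdx z₁ z₂ γ with hkdef
    set Q := Qc z₁ z₂ γ with hQ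
    set w := wc z₂ c d with hw
    have hwδ : ‖w‖ = δ := by rw [hδ, denom_eq_wc]
    have hNw : Complex.normSq w = δ ^ 2 := by
      rw [← Complex.sq_norm, hwδ]
    -- Step 1 : re (Q * conj w) = (θ - t) * normSq w
    have hre : (Q * (starRingEnd ℂ) w).re = (θ - (t : ℝ)) * Complex.normSq w := by
      have hQe : Q = Kc z₁ z₂ c d - (t : ℂ) * w := Qc_eq z₁ z₂ γ
      have : Q * (starRingEnd ℂ) w
          = Kc z₁ z₂ c d * (starRingEnd ℂ) w - (t : ℂ) * (Complex.normSq w : ℂ) := by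
        rw [hQe]; rw [sub_mul, mul_assoc, Complex.mul_conj]
      have hN0 : Complex.normSq w ≠ 0 := by rw [hNw]; positivity
      have hθN : (Kc z₁ z₂ c d * (starRingEnd ℂ) w).re = θ * Complex.normSq w := by
        rw [hθ, theta, ← hw]; field_simp
      rw [this, Complex.sub_re, hθN, show ((t:ℂ) * ((Complex.normSq w : ℝ) : ℂ)).re
        = (t:ℝ) * Complex.normSq w by simp]
      ring
    -- Step 2 : |θ - t| ≥ |k|/2
    have hk1 : (1 : ℝ) ≤ |(k : ℝ)| := by
      rw [← Int.cast_abs]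
      exact_mod_cast Int.one_le_abs (by exact_mod_cast hk)
    have hround : |θ - (round θ : ℝ)| ≤ 1 / 2 := abs_sub_round θ
    have hstep2 : |(k : ℝ)| / 2 ≤ |θ - (t : ℝ)| := by
      have h1 : |(k : ℝ)| - 1/2 ≤ |θ - (t:ℝ)| := by
        have : (k : ℝ) = (t : ℝ) - (round θ : ℝ) := by
          rw [hkdef, kIdx]; push_cast; ring
        have habs : |(t : ℝ) - (round θ : ℝ)| ≤ |θ - (t:ℝ)| + |θ - (round θ : ℝ)| := by
          calc |(t : ℝ) - (round θ : ℝ)| = |((t:ℝ) - θ) + (θ - round θ)| := by ring_nf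
            _ ≤ |(t:ℝ) - θ| + |θ - (round θ:ℝ)| := abs_add_le _ _
            _ = |θ - (t:ℝ)| + |θ - (round θ:ℝ)| := by rw [abs_sub_comm]
        rw [this]; linarith
      linarith
    -- Step 3 : δ * (|k|/2) ≤ abs Q
    have hstep3 : δ * (|(k : ℝ)| / 2) ≤ ‖Q‖ := by
      have habs : |(Q * (starRingEnd ℂ) w).re| ≤ ‖Q‖ * δ := by
        calc |(Q * (starRingEnd ℂ) w).re| ≤ ‖(Q * (starRingEnd ℂ) w)‖ :=
              Complex.abs_re_le_norm _
          _ = ‖Q‖ * δ := by rw [norm_mul, Complex.norm_conj, hwδ]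
      rw [hre, hNw, abs_mul] at habs
      have h2 : |θ - (t:ℝ)| * δ ^ 2 ≤ ‖Q‖ * δ := by
        calc |θ - (t:ℝ)| * δ ^ 2 = |θ - (t:ℝ)| * |δ ^ 2| := by
              rw [_root_.abs_of_nonneg (by positivity : (0:ℝ) ≤ δ ^ 2)]
          _ ≤ ‖Q‖ * δ := habs
      have h3 : (|(k:ℝ)| / 2) * δ ≤ |θ - (t:ℝ)| * δ := by
        exact mul_le_mul_of_nonneg_right hstep2 hδpos.le
      have h4 : (|(k:ℝ)| / 2) * δ * δ ≤ ‖Q‖ * δ := by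
        calc (|(k:ℝ)| / 2) * δ * δ ≤ |θ - (t:ℝ)| * δ * δ :=
              mul_le_mul_of_nonneg_right h3 hδpos.le
          _ = |θ - (t:ℝ)| * δ ^ 2 := by ring
          _ ≤ ‖Q‖ * δ := h2
      have := le_of_mul_le_mul_right (by linarith [h4] : δ * (|(k:ℝ)|/2) * δ ≤ ‖Q‖ * δ) hδpos
      linarith [this]
    -- Step 4 : cosh ≥ δ²k²/(8 y₁ y₂)
    have hC : (0:ℝ) < 2 * z₁.im * z₂.im := by positivity
    have hstep4 : (δ ^ 2 * (k : ℝ) ^ 2) / (8 * z₁.im * z₂.im)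
        ≤ Real.cosh (dist z₁ (γ • z₂)) := by
      rw [cosh_dist_eq z₁ z₂ γ]
      have hQ2 : (δ * (|(k:ℝ)|/2)) ^ 2 ≤ ‖Q‖ ^ 2 := by
        apply pow_le_pow_left₀ (by positivity) hstep3
      calc (δ ^ 2 * (k : ℝ) ^ 2) / (8 * z₁.im * z₂.im)
          = (δ * (|(k:ℝ)|/2)) ^ 2 / (2 * z₁.im * z₂.im) := by
            rw [mul_pow, div_pow, ← _root_.sq_abs ((k:ℝ))]
            field_simp; ring
        _ ≤ ‖Q‖ ^ 2 / (2 * z₁.im * z₂.im) := by gcongr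
        _ ≤ 1 + ‖Q‖ ^ 2 / (2 * z₁.im * z₂.im) := by linarith [le_refl (0:ℝ)]
    have hkpos : (0:ℝ) < (k:ℝ)^2 := by
      have : (k:ℝ) ≠ 0 := by exact_mod_cast hk
      positivity
    have hBpos : (0:ℝ) < (δ ^ 2 * (k : ℝ) ^ 2) / (8 * z₁.im * z₂.im) := by positivity
    calc Real.cosh (dist z₁ (γ • z₂)) ^ (-s)
        ≤ ((δ ^ 2 * (k : ℝ) ^ 2) / (8 * z₁.im * z₂.im)) ^ (-s) :=
          Real.rpow_le_rpow_of_nonpos hBpos hstep4 (neg_nonpos.mpr hs0.le)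
      _ = (8 * z₁.im * z₂.im) ^ s * (δ ^ (-(2*s)) * ((k:ℝ)^2) ^ (-s)) := by
          rw [div_eq_mul_inv, Real.mul_rpow (by positivity) (by positivity),
            Real.mul_rpow (by positivity) (by positivity),
            Real.inv_rpow (by positivity),
            Real.rpow_neg (by positivity : (0:ℝ) ≤ 8 * z₁.im * z₂.im), inv_inv,
            sq_rpow_neg hδpos.le]
          ring
      _ ≤ PC z₁ z₂ s * (δ ^ (-(2 * s)) * vW k) := by
          have h1 : ((k:ℝ)^2) ^ (-s) ≤ vW k := by
            rw [vW, if_neg hk]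
            have hk2 : (1:ℝ) ≤ (k:ℝ)^2 := by nlinarith [hk1, _root_.sq_abs ((k:ℝ))]
            calc ((k:ℝ)^2) ^ (-s) ≤ ((k:ℝ)^2) ^ (-1 : ℝ) :=
                  Real.rpow_le_rpow_of_exponent_le hk2 (by linarith)
              _ = ((k:ℝ)^2)⁻¹ := Real.rpow_neg_one _
          calc (8 * z₁.im * z₂.im) ^ s * (δ ^ (-(2*s)) * ((k:ℝ)^2) ^ (-s))
              ≤ (8 * z₁.im * z₂.im) ^ s * (δ ^ (-(2*s)) * vW k) := by
                apply mul_le_mul_of_nonneg_left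
                  (mul_le_mul_of_nonneg_left h1 (Real.rpow_nonneg hδpos.le _))
                  (Real.rpow_nonneg (by positivity) _)
            _ ≤ PC z₁ z₂ s * (δ ^ (-(2 * s)) * vW k) := by
                apply mul_le_mul_of_nonneg_right (le_max_right _ _)
                exact mul_nonneg (Real.rpow_nonneg hδpos.le _) (vW_nonneg k)


lemma summable_vW : Summable vW := by
  have h1 : Summable fun k : ℤ => 1 / (k:ℝ)^2 := Real.summable_one_div_int_pow.mpr one_lt_two
  have h2 : Summable fun k : ℤ => if k = 0 then (1:ℝ) else 0 := by
    apply summable_of_ne_finset_zero (s := ({0} : Finset ℤ))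
    intro k hk
    simp only [Finset.mem_singleton] at hk
    simp [hk]
  refine (h1.add h2).congr fun k => ?_
  by_cases hk : k = 0
  · simp [vW, hk]
  · have : ((k:ℝ))^2 ≠ 0 := by
      have : (k:ℝ) ≠ 0 := by exact_mod_cast hk
      positivity
    simp [vW, hk, one_div]

lemma summable_eis (z : ℍ) {s : ℝ} (hs : 1 < s) :
    Summable fun x : Fin 2 → ℤ => ‖(x 0 * (z : ℂ) + x 1)‖ ^ (-(2 * s)) := by
  have h2s : (0:ℝ) ≤ 2 * s := by linarith
  have hsum : Summable fun x : Fin 2 → ℤ =>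
      EisensteinSeries.r z ^ (-(2*s)) * ‖x‖ ^ (-(2*s)) :=
    (EisensteinSeries.summable_one_div_norm_rpow (by linarith)).mul_left _
  refine hsum.of_nonneg_of_le (fun x => Real.rpow_nonneg (norm_nonneg _) _)
    (fun x => ?_)
  exact EisensteinSeries.summand_bound z h2s x

/-- The majorant on `(Fin 2 → ℤ) × ℤ`. -/
noncomputable def GM (z : ℍ) (s C : ℝ) : (Fin 2 → ℤ) × ℤ → ℝ :=
  fun p => C * ‖(p.1 0 * (z : ℂ) + p.1 1)‖ ^ (-(2 * s)) * vW p.2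

lemma summable_GM (z : ℍ) {s : ℝ} (hs : 1 < s) {C : ℝ} (hC : 0 ≤ C) :
    Summable (GM z s C) := by
  have := ((summable_eis z hs).mul_left C).mul_of_nonneg summable_vW
    (fun x => mul_nonneg hC (Real.rpow_nonneg (norm_nonneg _) _)) vW_nonneg
  exact this.congr fun p => by rw [GM]

lemma finite_except (z₁ z₂ : ℍ) :
    {γ : SL2Z | Real.cosh (dist z₁ (γ • z₂)) < 2}.Finite := by
  have hy₁ := z₁.im_pos; have hy₂ := z₂.im_pos
  set R : ℝ := Real.sqrt (4 * z₂.im / z₁.im) with hR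
  set QB : ℝ := Real.sqrt (2 * z₁.im * z₂.im) with hQB
  set M : ℝ := max (max ((‖(z₁ : ℂ)‖ * R + QB) / z₂.im)
      ((‖(z₁ : ℂ)‖ * R + QB) + ((‖(z₁ : ℂ)‖ * R + QB) / z₂.im) * ‖(z₂ : ℂ)‖))
    (max (R / z₂.im) (R + (R / z₂.im) * ‖(z₂ : ℂ)‖)) with hM
  set N : ℤ := ⌈M⌉ with hN
  have key : ∀ γ : SL2Z, Real.cosh (dist z₁ (γ • z₂)) < 2 →
      |γ 0 0| ≤ N ∧ |γ 0 1| ≤ N ∧ |γ 1 0| ≤ N ∧ |γ 1 1| ≤ N := by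
    intro γ hγ
    set a := γ 0 0; set b := γ 0 1; set c := γ 1 0; set d := γ 1 1
    set w := denom (γ : GL(2,ℝ)⁺) z₂ with hw
    set δ := ‖w‖ with hδ
    -- bound on δ
    have hδR : δ ≤ R := by
      have h1 := (cosh_dist_ge_denom z₁ z₂ γ).trans_lt hγ
      have h2 : δ ^ 2 ≤ 4 * z₂.im / z₁.im := by
        rw [div_lt_iff₀ (by positivity)] at h1
        rw [le_div_iff₀ (by positivity)]
        nlinarith
      rw [hR, show δ = Real.sqrt (δ ^ 2) by rw [Real.sqrt_sq (norm_nonneg _)]]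
      exact Real.sqrt_le_sqrt h2
    -- bound on |Q|
    have hQb : ‖(Qc z₁ z₂ γ)‖ ≤ QB := by
      have h1 := (cosh_dist_eq z₁ z₂ γ) ▸ hγ
      have h2 : ‖(Qc z₁ z₂ γ)‖ ^ 2 ≤ 2 * z₁.im * z₂.im := by
        rw [show (1:ℝ) + ‖(Qc z₁ z₂ γ)‖ ^ 2 / (2 * z₁.im * z₂.im) < 2 ↔
          ‖(Qc z₁ z₂ γ)‖ ^ 2 / (2 * z₁.im * z₂.im) < 1 by constructor <;> intro <;> linarith] at h1
        rw [div_lt_one (by positivity)] at h1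
        linarith
      rw [hQB, show ‖(Qc z₁ z₂ γ)‖ = Real.sqrt (‖(Qc z₁ z₂ γ)‖ ^ 2) by
        rw [Real.sqrt_sq (norm_nonneg _)]]
      exact Real.sqrt_le_sqrt h2
    have him : ∀ u : ℂ, |u.im| ≤ ‖u‖ := fun u => Complex.abs_im_le_norm u
    -- bound c
    have hwim : w.im = (c : ℝ) * z₂.im := by
      rw [hw, denom_eq']
      simp
      exact Or.inl rfl
    have hc : |(c:ℝ)| ≤ R / z₂.im := by
      have := him w
      rw [hwim, abs_mul, _root_.abs_of_nonneg hy₂.le] at this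
      rw [le_div_iff₀ hy₂]
      exact this.trans hδR |>.trans_eq' rfl
    -- bound d
    have hd : |(d:ℝ)| ≤ R + (R / z₂.im) * ‖(z₂ : ℂ)‖ := by
      have hdw : (d : ℂ) = w - (c:ℂ) * z₂ := by rw [hw, denom_eq']; ring
      calc |(d:ℝ)| = ‖(d : ℂ)‖ := by rw [Complex.norm_intCast]
        _ = ‖(w - (c:ℂ) * z₂)‖ := by rw [hdw]
        _ ≤ ‖w‖ + ‖((c:ℂ) * z₂)‖ := by
            simpa [sub_eq_add_neg] using norm_add_le w (-((c:ℂ) * z₂))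
        _ = δ + |(c:ℝ)| * ‖(z₂ : ℂ)‖ := by
            rw [norm_mul, Complex.norm_intCast]
        _ ≤ R + (R / z₂.im) * ‖(z₂ : ℂ)‖ := by
            have := norm_nonneg (z₂ : ℂ)
            have := mul_le_mul_of_nonneg_right hc this
            gcongr
    -- a z₂ + b = z₁ w - Q
    have hab : (a:ℂ) * z₂ + (b:ℂ) = (z₁:ℂ) * w - Qc z₁ z₂ γ := by
      rw [hw, denom_eq', Qc]; ring
    set B : ℝ := ‖(z₁ : ℂ)‖ * R + QB with hB
    have habB : ‖((a:ℂ) * z₂ + (b:ℂ))‖ ≤ B := by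
      rw [hab]
      calc ‖((z₁:ℂ) * w - Qc z₁ z₂ γ)‖
          ≤ ‖((z₁:ℂ) * w)‖ + ‖(Qc z₁ z₂ γ)‖ := by
            simpa [sub_eq_add_neg] using norm_add_le ((z₁:ℂ) * w) (-(Qc z₁ z₂ γ))
        _ = ‖(z₁ : ℂ)‖ * δ + ‖(Qc z₁ z₂ γ)‖ := by rw [norm_mul]
        _ ≤ B := by rw [hB]; gcongr
    have ha : |(a:ℝ)| ≤ B / z₂.im := by
      have h1 := him ((a:ℂ) * z₂ + (b:ℂ))
      have h2 : ((a:ℂ) * z₂ + (b:ℂ)).im = (a:ℝ) * z₂.im := by simp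
      rw [h2, abs_mul, _root_.abs_of_nonneg hy₂.le] at h1
      rw [le_div_iff₀ hy₂]
      exact h1.trans habB
    have hb : |(b:ℝ)| ≤ B + (B / z₂.im) * ‖(z₂ : ℂ)‖ := by
      have hbw : (b : ℂ) = ((a:ℂ) * z₂ + (b:ℂ)) - (a:ℂ) * z₂ := by ring
      calc |(b:ℝ)| = ‖(b : ℂ)‖ := by rw [Complex.norm_intCast]
        _ ≤ ‖((a:ℂ) * z₂ + (b:ℂ))‖ + ‖((a:ℂ) * z₂)‖ := by
            rw [hbw]
            simpa [sub_eq_add_neg] using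
              norm_add_le ((a:ℂ) * z₂ + (b:ℂ)) (-((a:ℂ) * z₂))
        _ = ‖((a:ℂ) * z₂ + (b:ℂ))‖ + |(a:ℝ)| * ‖(z₂ : ℂ)‖ := by
            rw [norm_mul, Complex.norm_intCast]
        _ ≤ B + (B / z₂.im) * ‖(z₂ : ℂ)‖ := by
            have := norm_nonneg (z₂ : ℂ)
            gcongr
    -- conclude: integer bounds
    have toN : ∀ x : ℤ, (|(x:ℝ)| ≤ M) → |x| ≤ N := by
      intro x hx
      have hxN : |(x:ℝ)| ≤ (N:ℝ) := hx.trans (Int.le_ceil M)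
      rw [abs_le] at hxN ⊢
      exact ⟨by exact_mod_cast hxN.1, by exact_mod_cast hxN.2⟩
    refine ⟨toN a (ha.trans ?_), toN b (hb.trans ?_), toN c (hc.trans ?_), toN d (hd.trans ?_)⟩
    · exact le_max_of_le_left (le_max_left _ _)
    · exact le_max_of_le_left (le_max_right _ _)
    · exact le_max_of_le_right (le_max_left _ _)
    · exact le_max_of_le_right (le_max_right _ _)
  -- use the injection into a finite box
  have hinj : Function.Injective
      (fun γ : SL2Z => (γ 0 0, γ 0 1, γ 1 0, γ 1 1)) := by
    intro γ γ' h
    simp only [Prod.mk.injEq] at h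
    exact sl2z_ext h.1 h.2.1 h.2.2.1 h.2.2.2
  have hbox : (Set.Icc ((-N, -N, -N, -N) : ℤ × ℤ × ℤ × ℤ) (N, N, N, N)).Finite :=
    Set.finite_Icc _ _
  refine (hbox.preimage hinj.injOn).subset ?_
  intro γ hγ
  obtain ⟨ha, hb, hc, hd⟩ := key γ hγ
  simp only [Set.mem_preimage, Set.mem_Icc, Prod.le_def]
  rw [abs_le] at ha hb hc hd
  exact ⟨⟨ha.1, hb.1, hc.1, hd.1⟩, ⟨ha.2, hb.2, hc.2, hd.2⟩⟩



theorem main (s : ℝ) (hs : 1 < s) (z₁ z₂ : ℍ)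
    (h : ∀ γ : SL2Z, γ • z₂ ≠ z₁) :
    Summable (fun γ : SL2Z => legendreQ s (Real.cosh (dist z₁ (γ • z₂)))) ∧
    0 < ∑' γ : SL2Z, legendreQ s (Real.cosh (dist z₁ (γ • z₂))) := by
  have hs0 : (0:ℝ) < s := by linarith
  have hcosh1 : ∀ γ : SL2Z, 1 < Real.cosh (dist z₁ (γ • z₂)) := by
    intro γ
    rw [Real.one_lt_cosh]
    exact dist_ne_zero.mpr fun hz => h γ hz.symm
  have hFnn : ∀ γ : SL2Z, 0 ≤ legendreQ s (Real.cosh (dist z₁ (γ • z₂))) :=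
    fun γ => legendreQ_nonneg (hcosh1 γ).le
  have hfin := finite_except z₁ z₂
  set C : ℝ := QK s * PC z₁ z₂ s with hC
  have hCnn : 0 ≤ C := mul_nonneg (QK_nonneg s) (PC_nonneg z₁ z₂ s)
  have hsummable : Summable
      (fun γ : SL2Z => legendreQ s (Real.cosh (dist z₁ (γ • z₂)))) := by
    rw [← hfin.summable_compl_iff]
    refine Summable.of_nonneg_of_le (fun γ => hFnn γ.1) (fun γ => ?_)
      (((summable_GM z₂ hs hCnn).comp_injective
        ((phi_injective z₁ z₂).comp Subtype.val_injective)))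
    obtain ⟨γ, hγ⟩ := γ
    have ht2 : 2 ≤ Real.cosh (dist z₁ (γ • z₂)) := not_lt.mp hγ
    calc legendreQ s (Real.cosh (dist z₁ (γ • z₂)))
        ≤ QK s * Real.cosh (dist z₁ (γ • z₂)) ^ (-s) := legendreQ_le hs0 ht2
      _ ≤ QK s * (PC z₁ z₂ s *
            (‖(denom (γ : GL(2,ℝ)⁺) z₂)‖ ^ (-(2*s)) * vW (kIdx z₁ z₂ γ))) :=
          mul_le_mul_of_nonneg_left (key_bound z₁ z₂ hs.le γ) (QK_nonneg s)
      _ = GM z₂ s C ((phi z₁ z₂ ∘ Subtype.val) ⟨γ, hγ⟩) := by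
          simp only [Function.comp, GM, phi, Matrix.cons_val_zero, Matrix.cons_val_one,
            Matrix.head_cons]
          rw [denom_eq' z₂ γ, hC]
          ring
  exact ⟨hsummable, Summable.tsum_pos hsummable hFnn 1 (legendreQ_pos hs0 (hcosh1 1))⟩

end GreenAux

/-- Let `s > 1` be real and let `z₁, z₂ ∈ ℍ` be such that `γ·z₂ ≠ z₁` for
every `γ ∈ SL(2, ℤ)`.  Then the family `(Q_{s−1}(cosh d(z₁, γ·z₂)))_{γ ∈ SL(2,ℤ)}` is
summable, and its sum is strictly positive.  (Hence the Poincaré series defining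
`G_s(z₁, z₂) = −2·∑_γ Q_{s−1}(cosh d(z₁, γ·z₂))` converges absolutely and
`G_s(z₁, z₂) < 0` off the diagonal orbit.) -/
theorem green_series_summable_pos (s : ℝ) (hs : 1 < s) (z₁ z₂ : ℍ)
    (h : ∀ γ : Matrix.SpecialLinearGroup (Fin 2) ℤ, γ • z₂ ≠ z₁) :
    Summable (fun γ : Matrix.SpecialLinearGroup (Fin 2) ℤ =>
        legendreQ s (Real.cosh (dist z₁ (γ • z₂)))) ∧
    0 < ∑' γ : Matrix.SpecialLinearGroup (Fin 2) ℤ,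
        legendreQ s (Real.cosh (dist z₁ (γ • z₂))) :=
  GreenAux.main s hs z₁ z₂ h
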